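/- arXiv:1105.2931 — 3 statements merged into one kernel-verified Lean document; each statement's English description precedes it below -/
import Mathlib

section
/- Let A : ℝ^n → ℝ^k be a surjective linear map and let B^n be the open unit ball of ℝ^n. Then the k-dimensional volume of A(B^n) equals ω_k · |det(A restricted to (ker A)^⊥)|, where ω_k is the volume of the unit ball in ℝ^k. -/
open MeasureTheory

set_option maxHeartbeats 1000000

/-- For a surjective linear map `A : ℝⁿ → ℝᵏ`, the `k`-dimensional volume of the
image of the open unit ball equals `ω_k · |det(A|_{(ker A)ᗮ})|`, the determinant being computed
with respect to an orthonormal basis of `(ker A)ᗮ` and the standard orthonormal basis of `ℝᵏ`,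
and `ω_k` being the volume of the unit ball of `ℝᵏ`. -/
theorem stmt1 (n k : ℕ)
    (A : EuclideanSpace ℝ (Fin n) →ₗ[ℝ] EuclideanSpace ℝ (Fin k))
    (hA : Function.Surjective A)
    (b : OrthonormalBasis (Fin k) ℝ ((LinearMap.ker A)ᗮ : Submodule ℝ (EuclideanSpace ℝ (Fin n)))) :
    volume (A '' Metric.ball (0 : EuclideanSpace ℝ (Fin n)) 1) =
      volume (Metric.ball (0 : EuclideanSpace ℝ (Fin k)) 1) *
        ENNReal.ofReal
          |Matrix.det (LinearMap.toMatrix b.toBasis (EuclideanSpace.basisFun (Fin k) ℝ).toBasis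
              (A.domRestrict (LinearMap.ker A)ᗮ))| := by
  set A' := A.domRestrict (LinearMap.ker A)ᗮ with hA'
  set e : EuclideanSpace ℝ (Fin k) →ₗ[ℝ] ((LinearMap.ker A)ᗮ : Submodule ℝ (EuclideanSpace ℝ (Fin n))) :=
    b.repr.symm.toLinearEquiv.toLinearMap with he
  set f : EuclideanSpace ℝ (Fin k) →ₗ[ℝ] EuclideanSpace ℝ (Fin k) := A'.comp e with hf
  have himg : A '' Metric.ball 0 1 = f '' Metric.ball 0 1 := by
    ext y
    constructor
    · rintro ⟨x, hx, rfl⟩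
      simp only [Metric.mem_ball, dist_zero_right] at hx
      set x₁ := (Submodule.orthogonalProjectionOnto (LinearMap.ker A)ᗮ x : (LinearMap.ker A)ᗮ) with hx₁
      have hmem : x - (x₁ : EuclideanSpace ℝ (Fin n)) ∈ LinearMap.ker A := by
        have := Submodule.sub_starProjection_mem_orthogonal (K := (LinearMap.ker A)ᗮ) x
        rwa [Submodule.orthogonal_orthogonal] at this
      have hAx : A x = A' x₁ := by
        have : A (x - (x₁ : EuclideanSpace ℝ (Fin n))) = 0 := hmem
        rw [map_sub, sub_eq_zero] at this
        simpa [A'] using this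
      refine ⟨b.repr x₁, ?_, ?_⟩
      · simp only [Metric.mem_ball, dist_zero_right]
        have h1 : ‖b.repr x₁‖ = ‖x₁‖ := b.repr.norm_map x₁
        have h2 : ‖x₁‖ ≤ ‖x‖ := by
          calc ‖x₁‖ ≤ ‖Submodule.orthogonalProjectionOnto (LinearMap.ker A)ᗮ‖ * ‖x‖ :=
                (Submodule.orthogonalProjectionOnto (LinearMap.ker A)ᗮ).le_opNorm x
            _ ≤ 1 * ‖x‖ := by
                gcongr
                exact Submodule.orthogonalProjectionOnto_norm_le (K := (LinearMap.ker A)ᗮ)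
            _ = ‖x‖ := one_mul _
        linarith
      · simp [f, e, hAx]
    · rintro ⟨y, hy, rfl⟩
      simp only [Metric.mem_ball, dist_zero_right] at hy
      refine ⟨(b.repr.symm y : EuclideanSpace ℝ (Fin n)), ?_, ?_⟩
      · simp only [Metric.mem_ball, dist_zero_right]
        have : ‖(b.repr.symm y : EuclideanSpace ℝ (Fin n))‖ = ‖y‖ := by
          rw [Submodule.norm_coe]
          exact b.repr.symm.norm_map y
        linarith
      · simp [f, e, A']
  have hdet : LinearMap.det f =
      Matrix.det (LinearMap.toMatrix b.toBasis (EuclideanSpace.basisFun (Fin k) ℝ).toBasis A') := by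
    rw [← LinearMap.det_toMatrix (EuclideanSpace.basisFun (Fin k) ℝ).toBasis f, hf,
      LinearMap.toMatrix_comp _ b.toBasis]
    have hone : LinearMap.toMatrix (EuclideanSpace.basisFun (Fin k) ℝ).toBasis b.toBasis e = 1 := by
      ext i j
      rw [LinearMap.toMatrix_apply]
      have : e ((EuclideanSpace.basisFun (Fin k) ℝ).toBasis j) = b j := by
        simp [e, EuclideanSpace.basisFun_apply, OrthonormalBasis.repr_symm_single]
      rw [this]
      simp [Matrix.one_apply, OrthonormalBasis.coe_toBasis_repr_apply,
        OrthonormalBasis.repr_self, EuclideanSpace.single_apply, eq_comm]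
    rw [hone, Matrix.mul_one]
  rw [himg, Measure.addHaar_image_linearMap, hdet, mul_comm]
end

section
/- Let A : ℝ^n → ℝ^k be a surjective linear map. Then the function W ↦ |det(A|_W)| on the Grassmannian of k-dimensional subspaces of ℝ^n attains its maximum at W = range(A*) = (ker A)^⊥, i.e., for every k-dimensional subspace W of ℝ^n, |det(A|_W)| ≤ |det(A|_{(ker A)^⊥})|. -/
open Matrix in
lemma dotProduct_self_eq_norm_sq {k : ℕ} (x : EuclideanSpace ℝ (Fin k)) :
    (x : Fin k → ℝ) ⬝ᵥ x = ‖x‖ ^ 2 := by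
  rw [← real_inner_self_eq_norm_sq]
  simp [PiLp.inner_apply, RCLike.inner_apply, dotProduct, conj_trivial]
  rw [EuclideanSpace.norm_eq, Real.sq_sqrt (Finset.sum_nonneg fun i _ => sq_nonneg _)]
  congr 1; funext i; rw [Real.norm_eq_abs, sq_abs, sq]

open Matrix in
lemma det_le_one_of_contraction {k : ℕ} (M : Matrix (Fin k) (Fin k) ℝ)
    (hM : ∀ v : Fin k → ℝ, (M *ᵥ v) ⬝ᵥ (M *ᵥ v) ≤ v ⬝ᵥ v) : |M.det| ≤ 1 := by
  have hH : (Mᵀ * M).IsHermitian := by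
    simpa [Matrix.conjTranspose_eq_transpose_of_trivial] using Matrix.isHermitian_conjTranspose_mul_self M
  have key : ∀ i, 0 ≤ hH.eigenvalues i ∧ hH.eigenvalues i ≤ 1 := by
    intro i
    set v : EuclideanSpace ℝ (Fin k) := hH.eigenvectorBasis i with hv
    have hv1 : (v : Fin k → ℝ) ⬝ᵥ v = 1 := by
      have h1 : ‖v‖ = 1 := hH.eigenvectorBasis.orthonormal.1 i
      rw [dotProduct_self_eq_norm_sq, h1, one_pow]
    have heig : (Mᵀ * M) *ᵥ v = hH.eigenvalues i • ⇑v := hH.mulVec_eigenvectorBasis i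
    have hl : hH.eigenvalues i = (M *ᵥ v) ⬝ᵥ (M *ᵥ v) := by
      have h2 : (v : Fin k → ℝ) ⬝ᵥ ((Mᵀ * M) *ᵥ v) = hH.eigenvalues i := by
        rw [heig]
        show (v : Fin k → ℝ) ⬝ᵥ (hH.eigenvalues i • (v : Fin k → ℝ)) = _
        rw [dotProduct_smul, smul_eq_mul, hv1, mul_one]
      rw [← h2, ← Matrix.mulVec_mulVec, Matrix.dotProduct_mulVec, Matrix.vecMul_transpose]
    constructor
    · rw [hl]; exact Finset.sum_nonneg fun j _ => mul_self_nonneg _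
    · rw [hl]; calc (M *ᵥ v) ⬝ᵥ (M *ᵥ v) ≤ (v : Fin k → ℝ) ⬝ᵥ v := hM v
        _ = 1 := hv1
  have hdet : M.det ^ 2 = ∏ i, hH.eigenvalues i := by
    have h := hH.det_eq_prod_eigenvalues
    rw [Matrix.det_mul, Matrix.det_transpose] at h
    simpa [sq] using h
  have h1 : M.det ^ 2 ≤ 1 := by
    rw [hdet]; exact Finset.prod_le_one (fun i _ => (key i).1) (fun i _ => (key i).2)
  exact (sq_le_one_iff_abs_le_one M.det).mp h1

/-- For a surjective linear map `A : ℝⁿ → ℝᵏ`, the function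
`W ↦ |det(A|_W)|` on `k`-dimensional subspaces of `ℝⁿ` (determinants with respect to
orthonormal bases) attains its maximum at `W = (ker A)ᗮ = range A*`. -/
theorem stmt2 (n k : ℕ)
    (A : EuclideanSpace ℝ (Fin n) →ₗ[ℝ] EuclideanSpace ℝ (Fin k))
    (hA : Function.Surjective A)
    (bK : OrthonormalBasis (Fin k) ℝ ((LinearMap.ker A)ᗮ : Submodule ℝ (EuclideanSpace ℝ (Fin n))))
    (W : Submodule ℝ (EuclideanSpace ℝ (Fin n))) (hW : Module.finrank ℝ W = k)
    (bW : OrthonormalBasis (Fin k) ℝ W) :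
    LinearMap.range (LinearMap.adjoint A) = (LinearMap.ker A)ᗮ ∧
    |Matrix.det (LinearMap.toMatrix bW.toBasis (EuclideanSpace.basisFun (Fin k) ℝ).toBasis
        (A.domRestrict W))| ≤
      |Matrix.det (LinearMap.toMatrix bK.toBasis (EuclideanSpace.basisFun (Fin k) ℝ).toBasis
        (A.domRestrict (LinearMap.ker A)ᗮ))| := by
  constructor
  · -- range A* = (ker A)ᗮ
    have hle : LinearMap.range (LinearMap.adjoint A) ≤ (LinearMap.ker A)ᗮ := by
      rintro _ ⟨y, rfl⟩
      intro x hx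
      rw [LinearMap.adjoint_inner_right, LinearMap.mem_ker.mp hx, inner_zero_left]
    have hker_adj : LinearMap.ker (LinearMap.adjoint A) = ⊥ := by
      rw [Submodule.eq_bot_iff]
      intro y hy
      obtain ⟨x, hx⟩ := hA y
      have : (inner ℝ (A x) y : ℝ) = 0 := by
        rw [← LinearMap.adjoint_inner_right, LinearMap.mem_ker.mp hy, inner_zero_right]
      rw [hx] at this
      exact inner_self_eq_zero.mp this
    have h1 : Module.finrank ℝ (LinearMap.range (LinearMap.adjoint A)) = k := by
      have := LinearMap.finrank_range_add_finrank_ker (LinearMap.adjoint A)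
      rw [hker_adj, finrank_bot, finrank_euclideanSpace_fin] at this
      omega
    have h2 : Module.finrank ℝ ((LinearMap.ker A)ᗮ :
        Submodule ℝ (EuclideanSpace ℝ (Fin n))) = k := by
      have hr : LinearMap.range A = ⊤ := LinearMap.range_eq_top.2 hA
      have ha := LinearMap.finrank_range_add_finrank_ker A
      rw [hr, finrank_top, finrank_euclideanSpace_fin, finrank_euclideanSpace_fin] at ha
      have hb := Submodule.finrank_add_finrank_orthogonal (K := LinearMap.ker A)
      rw [finrank_euclideanSpace_fin] at hb
      omega
    exact Submodule.eq_of_le_of_finrank_eq hle (by rw [h1, h2])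
  · -- determinant inequality
    have hcomp : A.domRestrict W = (A.domRestrict (LinearMap.ker A)ᗮ).comp
        ((Submodule.orthogonalProjection (LinearMap.ker A)ᗮ).toLinearMap.comp W.subtype) := by
      refine LinearMap.ext fun w => ?_
      simp only [LinearMap.domRestrict_apply, LinearMap.comp_apply,
        ContinuousLinearMap.coe_coe, Submodule.coe_subtype]
      have hm : (w : EuclideanSpace ℝ (Fin n)) -
          Submodule.orthogonalProjection (LinearMap.ker A)ᗮ (w : EuclideanSpace ℝ (Fin n)) ∈
          LinearMap.ker A := by
        have := Submodule.sub_starProjection_mem_orthogonal (K := (LinearMap.ker A)ᗮ)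
          (w : EuclideanSpace ℝ (Fin n))
        rwa [Submodule.orthogonal_orthogonal] at this
      have h0 := LinearMap.mem_ker.mp hm
      rw [map_sub, sub_eq_zero] at h0
      exact h0
    set P : W →ₗ[ℝ] ((LinearMap.ker A)ᗮ : Submodule ℝ (EuclideanSpace ℝ (Fin n))) :=
      (Submodule.orthogonalProjection (LinearMap.ker A)ᗮ).toLinearMap.comp W.subtype with hP
    set M : Matrix (Fin k) (Fin k) ℝ := LinearMap.toMatrix bW.toBasis bK.toBasis P with hM
    have hmat : LinearMap.toMatrix bW.toBasis (EuclideanSpace.basisFun (Fin k) ℝ).toBasis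
        (A.domRestrict W) =
        LinearMap.toMatrix bK.toBasis (EuclideanSpace.basisFun (Fin k) ℝ).toBasis
          (A.domRestrict (LinearMap.ker A)ᗮ) * M := by
      rw [hcomp, LinearMap.toMatrix_comp _ bK.toBasis]
    have hrepr : ∀ (V : Submodule ℝ (EuclideanSpace ℝ (Fin n)))
        (b : OrthonormalBasis (Fin k) ℝ V) (x : V),
        dotProduct ⇑(b.toBasis.repr x) ⇑(b.toBasis.repr x) = ‖x‖ ^ 2 := by
      intro V b x
      have hc : ⇑(b.toBasis.repr x) = ((b.repr x : EuclideanSpace ℝ (Fin k)) : Fin k → ℝ) :=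
        funext fun i => b.coe_toBasis_repr_apply x i
      rw [hc, dotProduct_self_eq_norm_sq]
      show ‖b.repr x‖ ^ 2 = ‖x‖ ^ 2
      rw [b.repr.norm_map]
    have hcontr : ∀ v : Fin k → ℝ,
        dotProduct (M.mulVec v) (M.mulVec v) ≤ dotProduct v v := by
      intro v
      set w : W := bW.repr.symm (WithLp.toLp 2 v) with hw
      have hv : ⇑(bW.toBasis.repr w) = v := by
        funext i
        rw [OrthonormalBasis.coe_toBasis_repr_apply, hw,
          LinearIsometryEquiv.apply_symm_apply]
      have hmul : M.mulVec v = ⇑(bK.toBasis.repr (P w)) := by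
        rw [← hv, hM, LinearMap.toMatrix_mulVec_repr]
      have h1 : dotProduct (M.mulVec v) (M.mulVec v) = ‖P w‖ ^ 2 := by
        rw [hmul]; exact hrepr _ bK (P w)
      have h2 : dotProduct v v = ‖w‖ ^ 2 := by
        rw [← hv]; exact hrepr W bW w
      rw [h1, h2]
      have hnorm : ‖P w‖ ≤ ‖w‖ := by
        have hle := ContinuousLinearMap.le_opNorm
          (Submodule.orthogonalProjection ((LinearMap.ker A)ᗮ : Submodule ℝ (EuclideanSpace ℝ (Fin n))))
          (w : EuclideanSpace ℝ (Fin n))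
        have h01 : ‖Submodule.orthogonalProjection
            ((LinearMap.ker A)ᗮ : Submodule ℝ (EuclideanSpace ℝ (Fin n)))‖ ≤ 1 :=
          Submodule.orthogonalProjection_norm_le _
        calc ‖P w‖ ≤ ‖Submodule.orthogonalProjection
              ((LinearMap.ker A)ᗮ : Submodule ℝ (EuclideanSpace ℝ (Fin n)))‖ *
              ‖(w : EuclideanSpace ℝ (Fin n))‖ := hle
          _ ≤ 1 * ‖(w : EuclideanSpace ℝ (Fin n))‖ :=
              mul_le_mul_of_nonneg_right h01 (norm_nonneg _)
          _ = ‖w‖ := one_mul _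
      exact pow_le_pow_left₀ (norm_nonneg _) hnorm 2
    rw [hmat, Matrix.det_mul, abs_mul]
    exact mul_le_of_le_one_right (abs_nonneg _) (det_le_one_of_contraction M hcontr)
end

section
/- (Equality case of linear nonsqueezing) In the setting of the linear middle-dimensional nonsqueezing theorem, vol_{2k}(P Φ(B^{2n}(R))) = ω_{2k} R^{2k} holds if and only if the subspace Φ*V is a complex subspace of ℝ^{2n} ≅ ℂ^n. -/
open MeasureTheory

/-- The standard symplectic form `Ω = Σ dp_j ∧ dq_j` on `ℝ²ⁿ ≅ ℂⁿ`, namely the imaginary part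
of the Hermitian inner product. -/
noncomputable def stdSymp (n : ℕ) (u v : EuclideanSpace ℂ (Fin n)) : ℝ :=
  (inner ℂ u v : ℂ).im

section Aux
open Matrix Module
variable {E F : Type*} [NormedAddCommGroup E] [InnerProductSpace ℝ E] [FiniteDimensional ℝ E]
  [NormedAddCommGroup F] [InnerProductSpace ℝ F] [FiniteDimensional ℝ F]

local notation "⟪" x ", " y "⟫" => inner ℝ x y

lemma det_adjoint (f : E →ₗ[ℝ] E) : LinearMap.det (LinearMap.adjoint f) = LinearMap.det f := by
  classical
  let b := stdOrthonormalBasis ℝ E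
  rw [← LinearMap.det_toMatrix b.toBasis, ← LinearMap.det_toMatrix b.toBasis,
    LinearMap.toMatrix_adjoint]
  rw [show (LinearMap.toMatrix b.toBasis b.toBasis f)ᴴ = (LinearMap.toMatrix b.toBasis b.toBasis f)ᵀ from by
    ext i j; simp [Matrix.conjTranspose_apply]]
  exact Matrix.det_transpose _

lemma symmetric_det_eq_prod {T : F →ₗ[ℝ] F} (hT : T.IsSymmetric) :
    LinearMap.det T = ∏ i, hT.eigenvalues rfl i := by
  classical
  set b := hT.eigenvectorBasis rfl with hb
  rw [← LinearMap.det_toMatrix b.toBasis]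
  have : LinearMap.toMatrix b.toBasis b.toBasis T = Matrix.diagonal (hT.eigenvalues rfl) := by
    ext i j
    rw [LinearMap.toMatrix_apply]
    rw [OrthonormalBasis.coe_toBasis, hT.apply_eigenvectorBasis]
    simp only [_root_.map_smul, Finsupp.smul_apply, Basis.repr_self, Finsupp.single_apply, Matrix.diagonal_apply, smul_eq_mul]
    rcases eq_or_ne i j with h | h
    · subst h; simp [← hb, OrthonormalBasis.repr_self]
    · simp [← hb, OrthonormalBasis.repr_self, h, Ne.symm h]
  rw [this, Matrix.det_diagonal]

lemma contraction_det {T : F →ₗ[ℝ] F} (hT : T.IsSymmetric)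
    (h0 : ∀ x, 0 ≤ ⟪T x, x⟫) (h1 : ∀ x, ⟪T x, x⟫ ≤ ‖x‖ ^ 2) :
    LinearMap.det T ≤ 1 ∧ (LinearMap.det T = 1 → T = LinearMap.id) := by
  classical
  set b := hT.eigenvectorBasis rfl with hb
  have hμ : ∀ i, T (b i) = hT.eigenvalues rfl i • b i := fun i => by
    exact_mod_cast hT.apply_eigenvectorBasis rfl i
  have hnorm : ∀ i, ‖b i‖ = 1 := fun i => b.orthonormal.1 i
  have hval : ∀ i, hT.eigenvalues rfl i = ⟪T (b i), b i⟫ := by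
    intro i
    rw [hμ i, real_inner_smul_left, real_inner_self_eq_norm_sq, hnorm i]
    ring
  have h0' : ∀ i, 0 ≤ hT.eigenvalues rfl i := fun i => (hval i) ▸ h0 (b i)
  have h1' : ∀ i, hT.eigenvalues rfl i ≤ 1 := fun i => by
    rw [hval i]; simpa [hnorm i] using h1 (b i)
  have hdet := symmetric_det_eq_prod hT
  constructor
  · rw [hdet]
    exact Finset.prod_le_one (fun i _ => h0' i) (fun i _ => h1' i)
  · intro hdet1
    have hall : ∀ i, hT.eigenvalues rfl i = 1 := by
      intro i
      by_contra hne
      have hlt : hT.eigenvalues rfl i < 1 := lt_of_le_of_ne (h1' i) hne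
      have : ∏ j, hT.eigenvalues rfl j < 1 := by
        calc ∏ j, hT.eigenvalues rfl j
            = hT.eigenvalues rfl i * ∏ j ∈ Finset.univ.erase i, hT.eigenvalues rfl j := by
              rw [Finset.mul_prod_erase _ _ (Finset.mem_univ i)]
          _ ≤ hT.eigenvalues rfl i * 1 := by
              apply mul_le_mul_of_nonneg_left _ (h0' i)
              exact Finset.prod_le_one (fun j _ => h0' j) (fun j _ => h1' j)
          _ < 1 := by rw [mul_one]; exact hlt
      rw [hdet] at hdet1
      exact absurd hdet1 (ne_of_lt this)
    apply b.toBasis.ext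
    intro i
    simp [hμ i, hall i]


lemma abs_one_of_mul_self {a : ℝ} (h : a * a = 1) : |a| = 1 := by
  rcases mul_self_eq_one_iff.mp h with h | h <;> simp [h]

lemma norm_of_inner_eq {A : F →ₗ[ℝ] E} (h : ∀ x y, ⟪A x, A y⟫ = ⟪x, y⟫) (x : F) :
    ‖A x‖ = ‖x‖ := by
  have := h x x
  rw [real_inner_self_eq_norm_sq, real_inner_self_eq_norm_sq] at this
  have h2 := congrArg Real.sqrt this
  simpa [Real.sqrt_sq, norm_nonneg] using h2

lemma adjoint_norm_le {Q : F →ₗ[ℝ] E} (hQ : ∀ x y, ⟪Q x, Q y⟫ = ⟪x, y⟫) (y : E) :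
    ‖LinearMap.adjoint Q y‖ ≤ ‖y‖ := by
  set z := LinearMap.adjoint Q y with hz
  have h1 : ‖z‖ ^ 2 = ⟪y, Q z⟫ := by
    rw [← real_inner_self_eq_norm_sq, hz]
    rw [LinearMap.adjoint_inner_left]
  have h2 : ⟪y, Q z⟫ ≤ ‖y‖ * ‖Q z‖ := real_inner_le_norm _ _
  rw [norm_of_inner_eq hQ z] at h2
  rcases eq_or_lt_of_le (norm_nonneg z) with h | h
  · rw [← h]; exact norm_nonneg y
  · have h4 : ‖z‖ ^ 2 ≤ ‖y‖ * ‖z‖ := by rw [h1]; exact h2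
    exact le_of_mul_le_mul_right (by nlinarith) h

lemma adjoint_norm_eq_mem {Q : F →ₗ[ℝ] E} (hQ : ∀ x y, ⟪Q x, Q y⟫ = ⟪x, y⟫) (y : E)
    (h : ‖LinearMap.adjoint Q y‖ = ‖y‖) : Q (LinearMap.adjoint Q y) = y := by
  set z := LinearMap.adjoint Q y with hz
  have h1 : ⟪Q z, y⟫ = ‖z‖ ^ 2 := by
    rw [real_inner_comm, ← real_inner_self_eq_norm_sq, hz, LinearMap.adjoint_inner_left]
  have h2 : ‖Q z - y‖ ^ 2 = 0 := by
    rw [norm_sub_sq_real, h1, norm_of_inner_eq hQ z, h]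
    ring
  have := pow_eq_zero_iff (n := 2) (by norm_num) |>.mp h2
  rw [norm_eq_zero, sub_eq_zero] at this
  exact this

/-- Isometry from `F` to a submodule `W` of `E` of the same finite rank. -/
noncomputable def isomToSubmodule (W : Submodule ℝ E) (h : finrank ℝ F = finrank ℝ W) :
    F ≃ₗᵢ[ℝ] W :=
  (stdOrthonormalBasis ℝ F).repr.trans
    (((stdOrthonormalBasis ℝ W).reindex (finCongr h.symm)).repr.symm)

lemma core_main (M : F →ₗ[ℝ] E) (J : E →ₗ[ℝ] E) (j : F →ₗ[ℝ] F)
    (hJ : ∀ x y, ⟪J x, J y⟫ = ⟪x, y⟫) (hj : ∀ x y, ⟪j x, j y⟫ = ⟪x, y⟫)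
    (hrel : ∀ x y, ⟪J (M x), M y⟫ = ⟪j x, y⟫) :
    ∃ (Q : F →ₗ[ℝ] E) (C : F →ₗ[ℝ] F),
      M = Q ∘ₗ C ∧ (∀ x y, ⟪Q x, Q y⟫ = ⟪x, y⟫) ∧
      (|LinearMap.det C| = 1 ↔ ∀ x, J (M x) ∈ LinearMap.range M) := by
  classical
  have hjinj : Function.Injective j := by
    intro x y hxy
    have : ⟪x - y, x - y⟫ = 0 := by
      have h1 : ⟪j (x - y), j (x - y)⟫ = ⟪x - y, x - y⟫ := hj _ _
      rw [map_sub, hxy, sub_self, inner_zero_left] at h1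
      exact h1.symm
    simpa [sub_eq_zero] using inner_self_eq_zero.mp this
  have hMinj : Function.Injective M := by
    rw [injective_iff_map_eq_zero]
    intro x hx
    have : j x = 0 := by
      apply ext_inner_right ℝ
      intro y
      rw [← hrel x y, hx]
      simp
    have := hjinj (a₁ := x) (a₂ := 0) (by simpa using this)
    exact this
  have hrank : finrank ℝ F = finrank ℝ (LinearMap.range M) :=
    (LinearMap.finrank_range_of_inj hMinj).symm
  set U := isomToSubmodule (LinearMap.range M) hrank with hU
  set Q : F →ₗ[ℝ] E := (LinearMap.range M).subtype ∘ₗ U.toLinearMap with hQdef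
  have hQapp : ∀ x, Q x = (U x : E) := fun _ => rfl
  have hQ : ∀ x y, ⟪Q x, Q y⟫ = ⟪x, y⟫ := by
    intro x y
    rw [hQapp x, hQapp y, ← Submodule.coe_inner]
    exact U.inner_map_map x y
  have hQnorm : ∀ x, ‖Q x‖ = ‖x‖ := by
    intro x
    have := hQ x x
    rw [real_inner_self_eq_norm_sq, real_inner_self_eq_norm_sq] at this
    have h2 := congrArg Real.sqrt this
    simpa [Real.sqrt_sq, norm_nonneg] using h2
  have hrangeQ : LinearMap.range Q = LinearMap.range M := by
    rw [hQdef, LinearMap.range_comp, LinearEquiv.range, Submodule.map_top,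
      Submodule.range_subtype]
  have hQadjQ : ∀ x, LinearMap.adjoint Q (Q x) = x := by
    intro x
    apply ext_inner_right ℝ
    intro y
    rw [LinearMap.adjoint_inner_left, hQ]
  set C : F →ₗ[ℝ] F := LinearMap.adjoint Q ∘ₗ M with hCdef
  have hQC : ∀ x, Q (C x) = M x := by
    intro x
    obtain ⟨z, hz⟩ : M x ∈ LinearMap.range Q := hrangeQ ▸ LinearMap.mem_range_self M x
    rw [hCdef]
    simp only [LinearMap.coe_comp, Function.comp_apply]
    rw [← hz, hQadjQ]
  refine ⟨Q, C, by ext x; exact (hQC x).symm, hQ, ?_⟩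
  have hJnorm : ∀ x, ‖J x‖ = ‖x‖ := norm_of_inner_eq hJ
  set S : F →ₗ[ℝ] F := LinearMap.adjoint Q ∘ₗ (J ∘ₗ Q) with hSdef
  have hSapp : ∀ x, S x = LinearMap.adjoint Q (J (Q x)) := fun _ => rfl
  have hSnorm_le : ∀ x, ‖S x‖ ≤ ‖x‖ := by
    intro x
    rw [hSapp]
    calc ‖LinearMap.adjoint Q (J (Q x))‖ ≤ ‖J (Q x)‖ := adjoint_norm_le hQ _
      _ = ‖Q x‖ := hJnorm _
      _ = ‖x‖ := hQnorm x
  set A : F →ₗ[ℝ] F := LinearMap.adjoint S ∘ₗ S with hAdef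
  have hAapp : ∀ x y, ⟪A x, y⟫ = ⟪S x, S y⟫ := by
    intro x y
    rw [hAdef]
    simp only [LinearMap.coe_comp, Function.comp_apply]
    rw [LinearMap.adjoint_inner_left]
  have hAsymm : A.IsSymmetric := by
    intro x y
    calc ⟪A x, y⟫ = ⟪S x, S y⟫ := hAapp x y
      _ = ⟪S y, S x⟫ := real_inner_comm _ _
      _ = ⟪A y, x⟫ := (hAapp y x).symm
      _ = ⟪x, A y⟫ := real_inner_comm _ _
  have h0 : ∀ x, 0 ≤ ⟪A x, x⟫ := fun x => by
    rw [hAapp]; exact real_inner_self_nonneg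
  have h1 : ∀ x, ⟪A x, x⟫ ≤ ‖x‖ ^ 2 := fun x => by
    rw [hAapp, real_inner_self_eq_norm_sq]
    exact pow_le_pow_left₀ (norm_nonneg _) (hSnorm_le x) 2
  have hCSC : LinearMap.adjoint C ∘ₗ (S ∘ₗ C) = j := by
    ext x
    apply ext_inner_right ℝ
    intro y
    simp only [LinearMap.coe_comp, Function.comp_apply]
    rw [LinearMap.adjoint_inner_left, hSapp, LinearMap.adjoint_inner_left, hQC, hQC]
    exact hrel x y
  have hdetj2 : LinearMap.det j * LinearMap.det j = 1 := by
    have hjadj : LinearMap.adjoint j ∘ₗ j = LinearMap.id := by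
      ext x
      apply ext_inner_right ℝ
      intro y
      simp only [LinearMap.coe_comp, Function.comp_apply, LinearMap.id_coe, id_eq]
      rw [LinearMap.adjoint_inner_left]
      exact hj x y
    have := congrArg LinearMap.det hjadj
    rw [LinearMap.det_comp, det_adjoint, LinearMap.det_id] at this
    exact this
  have hdetrel : LinearMap.det S * (LinearMap.det C * LinearMap.det C) = LinearMap.det j := by
    have := congrArg LinearMap.det hCSC
    rw [LinearMap.det_comp, LinearMap.det_comp, det_adjoint] at this
    rw [← this]
    ring
  have hdetA : LinearMap.det A = LinearMap.det S * LinearMap.det S := by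
    rw [hAdef, LinearMap.det_comp, det_adjoint]
  have hCinj : Function.Injective C := by
    intro x y hxy
    apply hMinj
    rw [← hQC, ← hQC, hxy]
  have hCdet0 : LinearMap.det C ≠ 0 := by
    have hbij : Function.Bijective C :=
      ⟨hCinj, (LinearMap.injective_iff_surjective).mp hCinj⟩
    have := (LinearEquiv.ofBijective C hbij).isUnit_det'
    have hco : ((LinearEquiv.ofBijective C hbij : F ≃ₗ[ℝ] F) : F →ₗ[ℝ] F) = C := rfl
    rw [hco] at this
    exact this.ne_zero
  constructor
  · intro hC1
    have hCC : LinearMap.det C * LinearMap.det C = 1 := by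
      rw [← abs_mul_abs_self (LinearMap.det C), hC1, mul_one]
    rw [hCC, mul_one] at hdetrel
    have hdetA1 : LinearMap.det A = 1 := by rw [hdetA, hdetrel]; exact hdetj2
    have hAid : A = LinearMap.id := (contraction_det hAsymm h0 h1).2 hdetA1
    have hSiso : ∀ x, ‖S x‖ = ‖x‖ := by
      intro x
      have : ⟪S x, S x⟫ = ⟪x, x⟫ := by
        rw [← hAapp, hAid]; rfl
      rw [real_inner_self_eq_norm_sq, real_inner_self_eq_norm_sq] at this
      have h2 := congrArg Real.sqrt this
      simpa [Real.sqrt_sq, norm_nonneg] using h2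
    intro x
    have hnorm : ‖LinearMap.adjoint Q (J (Q (C x)))‖ = ‖J (Q (C x))‖ := by
      rw [← hSapp, hSiso, hJnorm, hQnorm]
    have := adjoint_norm_eq_mem hQ _ hnorm
    have hmem : J (Q (C x)) ∈ LinearMap.range Q := ⟨_, this⟩
    rw [hQC] at hmem
    rw [← hrangeQ]
    exact hmem
  · intro hinv
    have hSiso : ∀ x, ‖S x‖ = ‖x‖ := by
      intro x
      obtain ⟨z, hz⟩ : Q x ∈ LinearMap.range M := hrangeQ ▸ LinearMap.mem_range_self Q x
      have hJm : J (Q x) ∈ LinearMap.range Q := by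
        rw [hrangeQ, ← hz]
        exact hinv z
      obtain ⟨w, hw⟩ := hJm
      rw [hSapp, ← hw, hQadjQ]
      rw [← hQnorm w, hw, hJnorm, hQnorm]
    have hAid : A = LinearMap.id := by
      set D : F →ₗ[ℝ] F := A - LinearMap.id with hDdef
      have hsymm : D.IsSymmetric := by
        intro x y
        simp only [hDdef, LinearMap.sub_apply, LinearMap.id_coe, id_eq, inner_sub_left,
          inner_sub_right]
        rw [hAsymm x y]
      have hzero : ∀ x, ⟪D x, x⟫ = 0 := by
        intro x
        simp only [hDdef, LinearMap.sub_apply, LinearMap.id_coe, id_eq, inner_sub_left]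
        rw [hAapp, real_inner_self_eq_norm_sq, real_inner_self_eq_norm_sq, hSiso]
        ring
      have := hsymm.inner_map_self_eq_zero.mp hzero
      rw [hDdef, sub_eq_zero] at this
      exact this
    have hdetA1 : LinearMap.det A = 1 := by rw [hAid]; exact LinearMap.det_id
    have hS2 : LinearMap.det S * LinearMap.det S = 1 := by rw [← hdetA]; exact hdetA1
    have habsS : |LinearMap.det S| = 1 := abs_one_of_mul_self hS2
    have : |LinearMap.det S| * (LinearMap.det C * LinearMap.det C) = |LinearMap.det j| := by
      rw [← abs_mul_abs_self (LinearMap.det C), ← abs_mul, ← abs_mul]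
      exact congrArg abs hdetrel
    rw [habsS, one_mul, abs_one_of_mul_self hdetj2] at this
    exact abs_one_of_mul_self this

lemma adjoint_apply_comp_self {Q : F →ₗ[ℝ] E} (hQ : ∀ x y, ⟪Q x, Q y⟫ = ⟪x, y⟫) (x : F) :
    LinearMap.adjoint Q (Q x) = x := by
  apply ext_inner_right ℝ
  intro y
  rw [LinearMap.adjoint_inner_left, hQ]

lemma adjoint_image_ball {Q : F →ₗ[ℝ] E} (hQ : ∀ x y, ⟪Q x, Q y⟫ = ⟪x, y⟫) (R : ℝ) :
    LinearMap.adjoint Q '' Metric.ball 0 R = Metric.ball (0 : F) R := by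
  ext y
  constructor
  · rintro ⟨x, hx, rfl⟩
    rw [mem_ball_zero_iff] at hx ⊢
    exact lt_of_le_of_lt (adjoint_norm_le hQ x) hx
  · intro hy
    rw [mem_ball_zero_iff] at hy
    exact ⟨Q y, by rw [mem_ball_zero_iff, norm_of_inner_eq hQ]; exact hy,
      adjoint_apply_comp_self hQ y⟩

lemma volume_adjoint_image_ball [MeasurableSpace F] [BorelSpace F]
    (μ : Measure F) [μ.IsAddHaarMeasure] {Q : F →ₗ[ℝ] E}
    (hQ : ∀ x y, ⟪Q x, Q y⟫ = ⟪x, y⟫) (C : F →ₗ[ℝ] F) (R : ℝ) :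
    μ (LinearMap.adjoint (Q ∘ₗ C) '' Metric.ball 0 R)
      = ENNReal.ofReal |LinearMap.det C| * μ (Metric.ball 0 R) := by
  rw [LinearMap.adjoint_comp, LinearMap.coe_comp, Set.image_comp,
    adjoint_image_ball hQ, Measure.addHaar_image_linearMap, det_adjoint]

section cx
variable {n : ℕ}

lemma realinner_eq (u v : EuclideanSpace ℂ (Fin n)) : (inner ℝ u v : ℝ) = (inner ℂ u v : ℂ).re := by
  simp [PiLp.inner_apply, Complex.re_sum]

/-- Multiplication by `I` as a real-linear map. -/
noncomputable def Jmap (n : ℕ) : EuclideanSpace ℂ (Fin n) →ₗ[ℝ] EuclideanSpace ℂ (Fin n) where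
  toFun x := Complex.I • x
  map_add' x y := smul_add _ _ _
  map_smul' c x := smul_comm _ _ _

lemma Jmap_inner (u v : EuclideanSpace ℂ (Fin n)) :
    (inner ℝ (Jmap n u) v : ℝ) = stdSymp n u v := by
  rw [realinner_eq, stdSymp]
  show ((inner ℂ (Complex.I • u) v : ℂ)).re = _
  rw [inner_smul_left]
  simp

lemma Jmap_isometry (u v : EuclideanSpace ℂ (Fin n)) :
    (inner ℝ (Jmap n u) (Jmap n v) : ℝ) = inner ℝ u v := by
  rw [realinner_eq, realinner_eq]
  show ((inner ℂ (Complex.I • u) (Complex.I • v) : ℂ)).re = _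
  rw [inner_smul_left, inner_smul_right]
  simp [← mul_assoc, Complex.conj_I]

lemma Jmap_Jmap (u : EuclideanSpace ℂ (Fin n)) : Jmap n (Jmap n u) = -u := by
  show Complex.I • Complex.I • u = -u
  rw [smul_smul, Complex.I_mul_I, neg_one_smul]

end cx

end Aux

set_option maxHeartbeats 2000000 in
/-- equality case of linear nonsqueezing: in the setting of the linear
middle-dimensional nonsqueezing theorem, `vol_{2k}(P Φ(B^{2n}(R))) = ω_{2k} R^{2k}` holds if
and only if the subspace `Φ* V` (Euclidean adjoint) is a complex subspace of `ℝ²ⁿ ≅ ℂⁿ`. -/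
theorem stmt6 (n k : ℕ) (hk : 1 ≤ k) (hkn : k ≤ n)
    (Φ : EuclideanSpace ℂ (Fin n) ≃ₗ[ℝ] EuclideanSpace ℂ (Fin n))
    (hΦ : ∀ u v, stdSymp n (Φ u) (Φ v) = stdSymp n u v)
    (V : Submodule ℝ (EuclideanSpace ℂ (Fin n)))
    (hVc : ∀ v ∈ V, Complex.I • v ∈ V)
    (hVdim : Module.finrank ℝ V = 2 * k)
    (R : ℝ) (hR : 0 < R)
    (e : V ≃ₗᵢ[ℝ] EuclideanSpace ℝ (Fin (2 * k))) :
    volume (e '' (V.orthogonalProjection '' (Φ '' Metric.ball 0 R))) =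
        volume (Metric.ball (0 : EuclideanSpace ℝ (Fin (2 * k))) R) ↔
      ∀ v ∈ Submodule.map (LinearMap.adjoint Φ.toLinearMap) V,
        Complex.I • v ∈ Submodule.map (LinearMap.adjoint Φ.toLinearMap) V := by
  classical
  letI instE : InnerProductSpace ℝ (EuclideanSpace ℂ (Fin n)) := by infer_instance
  letI instV : InnerProductSpace ℝ V := by infer_instance
  letI instEf : FiniteDimensional ℝ (EuclideanSpace ℂ (Fin n)) := by infer_instance
  set J : (EuclideanSpace ℂ (Fin n)) →ₗ[ℝ] (EuclideanSpace ℂ (Fin n)) := Jmap n with hJ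
  set Ψ : (EuclideanSpace ℂ (Fin n)) →ₗ[ℝ] (EuclideanSpace ℂ (Fin n)) := LinearMap.adjoint Φ.toLinearMap with hΨ
  -- the symplectic property of Φ in inner-product form
  have hΦsymp : ∀ u v, (inner ℝ (J (Φ u)) (Φ v) : ℝ) = inner ℝ (J u) v := by
    intro u v
    rw [hJ, Jmap_inner, Jmap_inner]
    exact hΦ u v
  have hop : ∀ x, Ψ (J (Φ x)) = J x := by
    intro x
    apply ext_inner_right ℝ
    intro y
    rw [hΨ, LinearMap.adjoint_inner_left]
    exact hΦsymp x y
  have hΨapp : ∀ z, Ψ z = -J (Φ.symm (J z)) := by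
    intro z
    have h1 := hop (Φ.symm (J z))
    rw [LinearEquiv.apply_symm_apply, hJ, Jmap_Jmap] at h1
    rw [show Ψ (-z) = -Ψ z from map_neg Ψ z] at h1
    rw [← h1, neg_neg]
  have hΨsymp : ∀ u v, (inner ℝ (J (Ψ u)) (Ψ v) : ℝ) = inner ℝ (J u) v := by
    intro u v
    have h1 : J (Ψ u) = Φ.symm (J u) := by
      rw [hΨapp, map_neg, hJ, Jmap_Jmap, neg_neg]
    rw [h1, hΨ, LinearMap.adjoint_inner_right]
    show (inner ℝ (Φ (Φ.symm (J u))) v : ℝ) = _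
    rw [LinearEquiv.apply_symm_apply]
  -- the complex structure on V and on F
  set jV : V →ₗ[ℝ] V :=
    { toFun := fun v => ⟨Complex.I • (v : (EuclideanSpace ℂ (Fin n))), hVc v v.2⟩
      map_add' := fun v w => Subtype.ext (by
        show Complex.I • ((v : (EuclideanSpace ℂ (Fin n))) + (w : (EuclideanSpace ℂ (Fin n)))) = Complex.I • (v : (EuclideanSpace ℂ (Fin n))) + Complex.I • (w : (EuclideanSpace ℂ (Fin n)))
        exact smul_add _ _ _)
      map_smul' := fun c v => Subtype.ext (by
        show Complex.I • (c • (v : (EuclideanSpace ℂ (Fin n)))) = c • (Complex.I • (v : (EuclideanSpace ℂ (Fin n))))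
        exact smul_comm _ _ _) } with hjV
  set jF : (EuclideanSpace ℝ (Fin (2 * k))) →ₗ[ℝ] EuclideanSpace ℝ (Fin (2 * k)) :=
    (e.toLinearEquiv : V →ₗ[ℝ] EuclideanSpace ℝ (Fin (2 * k))) ∘ₗ
      (jV ∘ₗ (e.symm.toLinearEquiv : EuclideanSpace ℝ (Fin (2 * k)) →ₗ[ℝ] V)) with hjF
  have hjFapp : ∀ x, jF x = e (jV (e.symm x)) := fun _ => rfl
  have hjVinner : ∀ v w : V, (inner ℝ (jV v) (jV w) : ℝ) = inner ℝ v w := by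
    intro v w
    rw [Submodule.coe_inner, Submodule.coe_inner]
    exact Jmap_isometry (v : (EuclideanSpace ℂ (Fin n))) (w : (EuclideanSpace ℂ (Fin n)))
  have hjFinner : ∀ x y : (EuclideanSpace ℝ (Fin (2 * k))), (inner ℝ (jF x) (jF y) : ℝ) = inner ℝ x y := by
    intro x y
    rw [hjFapp x, hjFapp y]
    calc (inner ℝ (e (jV (e.symm x))) (e (jV (e.symm y))) : ℝ)
        = inner ℝ (jV (e.symm x)) (jV (e.symm y)) := e.inner_map_map _ _
      _ = inner ℝ (e.symm x) (e.symm y) := hjVinner _ _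
      _ = inner ℝ x y := e.symm.inner_map_map x y
  set M : EuclideanSpace ℝ (Fin (2 * k)) →ₗ[ℝ] EuclideanSpace ℂ (Fin n) :=
    Ψ ∘ₗ (V.subtype ∘ₗ (e.symm.toLinearEquiv : EuclideanSpace ℝ (Fin (2 * k)) →ₗ[ℝ] V)) with hM
  have hMapp : ∀ x, M x = Ψ ((e.symm x : EuclideanSpace ℂ (Fin n))) := fun _ => rfl
  have hJinner : ∀ x y : EuclideanSpace ℂ (Fin n), (inner ℝ (J x) (J y) : ℝ) = inner ℝ x y :=
    fun x y => Jmap_isometry x y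
  have hrel : ∀ x y, (inner ℝ (J (M x)) (M y) : ℝ) = inner ℝ (jF x) y := by
    intro x y
    rw [hMapp, hMapp, hΨsymp]
    have h2 : J ((e.symm x : EuclideanSpace ℂ (Fin n))) =
        ((jV (e.symm x) : V) : EuclideanSpace ℂ (Fin n)) := rfl
    rw [h2, ← Submodule.coe_inner]
    calc (inner ℝ (jV (e.symm x)) (e.symm y) : ℝ)
        = inner ℝ (e (jV (e.symm x))) (e (e.symm y)) := (e.inner_map_map _ _).symm
      _ = inner ℝ (jF x) y := by rw [e.apply_symm_apply, ← hjFapp]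
  have hMrange : LinearMap.range M = Submodule.map Ψ V := by
    rw [hM, LinearMap.range_comp, LinearMap.range_comp, LinearEquiv.range, Submodule.map_top,
      Submodule.range_subtype]
  obtain ⟨Q, C, hMQC, hQ, hiff⟩ := core_main M J jF hJinner hjFinner hrel
  have hset : (⇑e '' (⇑(V.orthogonalProjection) '' (⇑Φ '' Metric.ball 0 R))) =
      ⇑(LinearMap.adjoint M) '' Metric.ball 0 R := by
    rw [Set.image_image, Set.image_image]
    apply Set.image_congr'
    intro x
    apply ext_inner_right ℝ
    intro y
    calc (inner ℝ (e (V.orthogonalProjection (Φ x))) y : ℝ)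
        = inner ℝ (e (V.orthogonalProjection (Φ x))) (e (e.symm y)) := by
          rw [e.apply_symm_apply]
      _ = inner ℝ (V.orthogonalProjection (Φ x)) (e.symm y) := e.inner_map_map _ _
      _ = inner ℝ (Φ x) ((e.symm y : V) : EuclideanSpace ℂ (Fin n)) :=
          Submodule.inner_orthogonalProjection_eq_of_mem_right _ _
      _ = inner ℝ x (M y) := by
          rw [hMapp, hΨ]
          exact (LinearMap.adjoint_inner_right Φ.toLinearMap x _).symm
      _ = inner ℝ (LinearMap.adjoint M x) y := (LinearMap.adjoint_inner_left M y x).symm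
  rw [hset, hMQC, volume_adjoint_image_ball volume hQ C R]
  have hballpos : volume (Metric.ball (0 : EuclideanSpace ℝ (Fin (2 * k))) R) ≠ 0 :=
    (Metric.measure_ball_pos volume 0 hR).ne'
  have hballfin : volume (Metric.ball (0 : EuclideanSpace ℝ (Fin (2 * k))) R) ≠ ⊤ :=
    measure_ball_lt_top.ne
  rw [ENNReal.mul_eq_right hballpos hballfin, ENNReal.ofReal_eq_one]
  rw [hiff]
  constructor
  · intro h v hv
    rw [← hMrange] at hv ⊢
    obtain ⟨x, rfl⟩ := hv
    exact h x
  · intro h x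
    have h2 := h (M x) (hMrange ▸ LinearMap.mem_range_self M x)
    rw [← hMrange] at h2
    exact h2
end
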